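/- For a shallow linear network ($L = 2$), at the PC inference fixed point the input-layer error equals a damped Gauss-Newton target: $e_1^* = \frac{\gamma_2}{\gamma_1} W_2^\top \left(I + \frac{\gamma_2}{\gamma_1} W_2 W_2^\top\right)^{-1} (y - W_2 W_1 x)$, which can be rewritten as $e_1^* = \left(W_2^\top W_2 + \frac{\gamma_1}{\gamma_2} I\right)^{-1} W_2^\top (y - W_2 W_1 x)$. -/

import Mathlib

open Matrix

lemma possemidef_smul {n : ℕ} {M : Matrix (Fin n) (Fin n) ℝ} (hM : M.PosSemidef)
    {c : ℝ} (hc : 0 ≤ c) : (c • M).PosSemidef := by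
  refine ⟨?_, fun x => ?_⟩
  · unfold Matrix.IsHermitian
    rw [conjTranspose_smul, hM.1]
    simp
  · exact (hM.smul hc).2 x

theorem shallow_pc_is_damped_gauss_newton (d0 d1 d2 : ℕ)
    (W1 : Matrix (Fin d1) (Fin d0) ℝ) (W2 : Matrix (Fin d2) (Fin d1) ℝ)
    (γ1 γ2 : ℝ) (hγ1 : 0 < γ1) (hγ2 : 0 < γ2)
    (x : Fin d0 → ℝ) (y : Fin d2 → ℝ) (v1 : Fin d1 → ℝ)
    (hcrit : γ2 • (W2ᵀ *ᵥ (y - W2 *ᵥ v1)) = γ1 • (v1 - W1 *ᵥ x))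
    (e1 : Fin d1 → ℝ) (he1 : e1 = v1 - W1 *ᵥ x) :
    e1 = (γ2 / γ1) • (W2ᵀ *ᵥ
        (((1 : Matrix (Fin d2) (Fin d2) ℝ) + (γ2 / γ1) • (W2 * W2ᵀ))⁻¹ *ᵥ
          (y - W2 *ᵥ (W1 *ᵥ x)))) ∧
    e1 = (W2ᵀ * W2 + (γ1 / γ2) • (1 : Matrix (Fin d1) (Fin d1) ℝ))⁻¹ *ᵥ
        (W2ᵀ *ᵥ (y - W2 *ᵥ (W1 *ᵥ x))) := by
  set r : Fin d2 → ℝ := y - W2 *ᵥ (W1 *ᵥ x) with hr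
  set A : Matrix (Fin d1) (Fin d1) ℝ :=
    W2ᵀ * W2 + (γ1 / γ2) • (1 : Matrix (Fin d1) (Fin d1) ℝ) with hA
  set B : Matrix (Fin d2) (Fin d2) ℝ :=
    (1 : Matrix (Fin d2) (Fin d2) ℝ) + (γ2 / γ1) • (W2 * W2ᵀ) with hB
  have hc : (0:ℝ) < γ2 / γ1 := div_pos hγ2 hγ1
  have hc' : (0:ℝ) < γ1 / γ2 := div_pos hγ1 hγ2
  have hcc : (γ2 / γ1) * (γ1 / γ2) = 1 := by field_simp
  -- positive definiteness
  have hWW : (W2ᵀ * W2).PosSemidef := by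
    have := Matrix.posSemidef_conjTranspose_mul_self (R := ℝ) W2
    simpa [Matrix.conjTranspose_eq_transpose_of_trivial] using this
  have hWW' : (W2 * W2ᵀ).PosSemidef := by
    have := Matrix.posSemidef_self_mul_conjTranspose (R := ℝ) W2
    simpa [Matrix.conjTranspose_eq_transpose_of_trivial] using this
  have hIdPD : ∀ {n : ℕ} (c : ℝ), 0 < c →
      (c • (1 : Matrix (Fin n) (Fin n) ℝ)).PosDef := by
    intro n c hcpos
    simpa [Matrix.smul_one_eq_diagonal] using
      (Matrix.posDef_diagonal_iff (d := fun _ : Fin n => c)).2 fun _ => hcpos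
  have hApd : A.PosDef := Matrix.PosDef.posSemidef_add hWW (hIdPD _ hc')
  have hBpd : B.PosDef :=
    Matrix.PosDef.add_posSemidef Matrix.PosDef.one (possemidef_smul hWW' hc.le)
  have hAdet : IsUnit A.det := (Matrix.isUnit_iff_isUnit_det _).1 hApd.isUnit
  have hBdet : IsUnit B.det := (Matrix.isUnit_iff_isUnit_det _).1 hBpd.isUnit
  -- key equation : A *ᵥ e1 = W2ᵀ *ᵥ r
  have hv1 : v1 = e1 + W1 *ᵥ x := by rw [he1]; abel
  have hkey : A *ᵥ e1 = W2ᵀ *ᵥ r := by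
    have h0 : y - W2 *ᵥ v1 = r - W2 *ᵥ e1 := by
      rw [hr, hv1, mulVec_add]; abel
    have h1 : γ2 • (W2ᵀ *ᵥ (r - W2 *ᵥ e1)) = γ1 • e1 := by
      rw [← h0, hcrit, ← he1]
    have h2 : γ2 • (W2ᵀ *ᵥ r) - γ2 • ((W2ᵀ * W2) *ᵥ e1) = γ1 • e1 := by
      rw [← mulVec_mulVec, ← smul_sub, ← mulVec_sub]
      exact h1
    have h3 : (W2ᵀ * W2) *ᵥ e1 + (γ1 / γ2) • e1 = W2ᵀ *ᵥ r := by
      have := congrArg (fun z => (γ2⁻¹ : ℝ) • z) h2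
      simp only [smul_sub, smul_smul, inv_mul_cancel₀ hγ2.ne', one_smul] at this
      rw [sub_eq_iff_eq_add] at this
      rw [this, div_eq_inv_mul]
      abel
    rw [hA, add_mulVec, smul_mulVec, one_mulVec, h3]
  have he1A : e1 = A⁻¹ *ᵥ (W2ᵀ *ᵥ r) := by
    rw [← hkey, mulVec_mulVec, Matrix.nonsing_inv_mul A hAdet, one_mulVec]
  refine ⟨?_, he1A⟩
  -- push-through identity
  have hmat : W2ᵀ * B = ((γ2 / γ1) • A) * W2ᵀ := by
    rw [hA, hB]
    simp only [Matrix.mul_add, Matrix.mul_one, Matrix.add_mul, Matrix.smul_mul,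
      Matrix.mul_smul, Matrix.one_mul, smul_smul, smul_add, Matrix.mul_assoc,
      hcc, one_smul]
    abel
  have hpush : A⁻¹ * W2ᵀ = (γ2 / γ1) • (W2ᵀ * B⁻¹) := by
    calc A⁻¹ * W2ᵀ = A⁻¹ * W2ᵀ * (B * B⁻¹) := by
          rw [Matrix.mul_nonsing_inv B hBdet, Matrix.mul_one]
      _ = A⁻¹ * (W2ᵀ * B) * B⁻¹ := by simp only [Matrix.mul_assoc]
      _ = A⁻¹ * (((γ2 / γ1) • A) * W2ᵀ) * B⁻¹ := by rw [hmat]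
      _ = (γ2 / γ1) • (W2ᵀ * B⁻¹) := by
          rw [Matrix.smul_mul, Matrix.mul_smul, Matrix.smul_mul, ← Matrix.mul_assoc,
            Matrix.nonsing_inv_mul A hAdet, Matrix.one_mul]
  rw [he1A, mulVec_mulVec, hpush, smul_mulVec, ← mulVec_mulVec]
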